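/- Let A_0, A_1, …, A_L ∈ ℝ^{n×n} be entrywise nonnegative matrices and let 𝒜 be the associated delay block matrix. If ρ(𝒜) = 0, then ρ(∑_{ℓ=0}^L A_ℓ) = 0. -/

import Mathlib

open Matrix BigOperators

/-- The spectral radius of a real square matrix: the maximum modulus of its
complex eigenvalues. -/
noncomputable def specRad {m : Type*} [Fintype m] [DecidableEq m]
    (A : Matrix m m ℝ) : ℝ :=
  (spectralRadius ℂ (A.map (algebraMap ℝ ℂ))).toReal

/-- The delay block matrix associated to matrices `A 0, …, A L`: first block row
`(A 0  A 1 ⋯ A L)`, identity matrices on the block subdiagonal, zeros elsewhere. -/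
def delayBlock {n L : ℕ} (A : Fin (L + 1) → Matrix (Fin n) (Fin n) ℝ) :
    Matrix (Fin n × Fin (L + 1)) (Fin n × Fin (L + 1)) ℝ :=
  fun p q =>
    if (p.2 : ℕ) = 0 then A q.2 p.1 q.1
    else if p.1 = q.1 ∧ (q.2 : ℕ) + 1 = (p.2 : ℕ) then 1 else 0

section SpecAux

open Polynomial

private lemma isNilpotent_of_spectrum_subset {m : Type*} [Fintype m] [DecidableEq m]
    (B : Matrix m m ℂ) (hs : spectrum ℂ B ⊆ {0}) : IsNilpotent B := by
  set φ := (Matrix.toLinAlgEquiv (Pi.basisFun ℂ m)) B with hφ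
  have hspec : spectrum ℂ φ = spectrum ℂ B := AlgEquiv.spectrum_eq _ _
  have hint : IsIntegral ℂ φ := Algebra.IsIntegral.isIntegral φ
  have hmono := minpoly.monic hint
  have hroots : ∀ r ∈ (minpoly ℂ φ).roots, r = 0 := by
    intro r hr
    have : (minpoly ℂ φ).IsRoot r := isRoot_of_mem_roots hr
    have : Module.End.HasEigenvalue φ r := Module.End.hasEigenvalue_iff_isRoot.mpr this
    have : r ∈ spectrum ℂ φ := Module.End.hasEigenvalue_iff_mem_spectrum.mp this
    simpa using hs (hspec ▸ this)
  have hsplit : (minpoly ℂ φ).Splits := IsAlgClosed.splits _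
  have hp : minpoly ℂ φ = X ^ (minpoly ℂ φ).roots.card := by
    have := hsplit.eq_prod_roots_of_monic hmono
    rw [this]
    rw [Multiset.eq_replicate.mpr ⟨rfl, hroots⟩]
    simp [Multiset.map_replicate, Multiset.prod_replicate]
  have hnilφ : IsNilpotent φ := by
    refine ⟨(minpoly ℂ φ).roots.card, ?_⟩
    have := minpoly.aeval ℂ φ
    rw [hp, map_pow, aeval_X] at this
    exact this
  have : IsNilpotent ((Matrix.toLinAlgEquiv (Pi.basisFun ℂ m)).symm φ) :=
    hnilφ.map (Matrix.toLinAlgEquiv (Pi.basisFun ℂ m)).symm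
  simpa [hφ] using this

private lemma specRad_zero_of_subset {m : Type*} [Fintype m] [DecidableEq m] (B : Matrix m m ℝ)
    (hs : spectrum ℂ (B.map (algebraMap ℝ ℂ)) ⊆ {0}) : specRad B = 0 := by
  have : spectralRadius ℂ (B.map (algebraMap ℝ ℂ)) = 0 := by
    refine le_antisymm ?_ zero_le
    refine iSup₂_le fun k hk => ?_
    have : k = 0 := hs hk
    simp [this]
  rw [specRad, this]; simp

private lemma subset_of_specRad_zero {m : Type*} [Fintype m] [DecidableEq m] (B : Matrix m m ℝ)
    (h : specRad B = 0) : spectrum ℂ (B.map (algebraMap ℝ ℂ)) ⊆ {0} := by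
  set Bc := B.map (algebraMap ℝ ℂ) with hBc
  have hfin : (spectrum ℂ Bc).Finite := Matrix.finite_spectrum Bc
  have hne : spectralRadius ℂ Bc ≠ ⊤ := by
    have hle : spectralRadius ℂ Bc ≤ (hfin.toFinset.sup (fun k => ‖k‖₊) : NNReal) := by
      refine iSup₂_le fun k hk => ?_
      exact_mod_cast ENNReal.coe_le_coe.mpr (Finset.le_sup (hfin.mem_toFinset.mpr hk))
    exact ne_top_of_le_ne_top ENNReal.coe_ne_top hle
  have h0 : spectralRadius ℂ Bc = 0 := by
    rcases (ENNReal.toReal_eq_zero_iff _).mp h with h' | h'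
    · exact h'
    · exact absurd h' hne
  intro μ hμ
  have : (‖μ‖₊ : ENNReal) ≤ spectralRadius ℂ Bc :=
    le_iSup₂ (f := fun (k : ℂ) (_ : k ∈ spectrum ℂ Bc) => (‖k‖₊ : ENNReal)) μ hμ
  rw [h0, nonpos_iff_eq_zero] at this
  have : ‖μ‖₊ = 0 := by exact_mod_cast this
  simpa using nnnorm_eq_zero.mp this

/-- A real matrix with zero spectral radius (over `ℂ`) is nilpotent. -/
private lemma isNilpotent_of_specRad_zero {m : Type*} [Fintype m] [DecidableEq m]
    (B : Matrix m m ℝ) (h : specRad B = 0) : IsNilpotent B := by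
  obtain ⟨k, hk⟩ := isNilpotent_of_spectrum_subset _ (subset_of_specRad_zero B h)
  refine ⟨k, ?_⟩
  ext p q
  have : ((B ^ k).map (algebraMap ℝ ℂ)) p q = 0 := by
    have hpow : (B ^ k).map (algebraMap ℝ ℂ) = (B.map (algebraMap ℝ ℂ)) ^ k := by
      have := map_pow ((algebraMap ℝ ℂ).mapMatrix (m := m)) B k
      simpa [RingHom.mapMatrix_apply] using this
    rw [hpow, hk]
    simp
  have : algebraMap ℝ ℂ ((B ^ k) p q) = 0 := this
  have := (algebraMap ℝ ℂ).injective (by simpa using this)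
  simpa using this

private lemma specRad_eq_zero_of_isNilpotent {m : Type*} [Fintype m] [DecidableEq m]
    (B : Matrix m m ℝ) (hB : IsNilpotent B) : specRad B = 0 := by
  apply specRad_zero_of_subset
  have hBc : IsNilpotent (B.map (algebraMap ℝ ℂ)) := by
    have := hB.map (algebraMap ℝ ℂ).mapMatrix
    simpa [RingHom.mapMatrix_apply] using this
  intro μ hμ
  by_contra hμ0
  have hμ0 : μ ≠ 0 := hμ0
  apply spectrum.notMem_iff.mpr ?_ hμ
  have h1 : IsUnit (1 - μ⁻¹ • (B.map (algebraMap ℝ ℂ))) :=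
    (hBc.smul μ⁻¹).isUnit_one_sub
  have : algebraMap ℂ (Matrix m m ℂ) μ - B.map (algebraMap ℝ ℂ)
      = μ • (1 - μ⁻¹ • (B.map (algebraMap ℝ ℂ))) := by
    rw [smul_sub, Algebra.algebraMap_eq_smul_one, smul_smul, mul_inv_cancel₀ hμ0, one_smul]
  rw [this, Algebra.smul_def]
  exact (IsUnit.map (algebraMap ℂ (Matrix m m ℂ)) hμ0.isUnit).mul h1

end SpecAux

section Comb

variable {n L : ℕ} (A : Fin (L + 1) → Matrix (Fin n) (Fin n) ℝ)
  (hA : ∀ ℓ i j, 0 ≤ A ℓ i j)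

private lemma nn_mul {m : Type*} [Fintype m] {M N : Matrix m m ℝ}
    (hM : ∀ p q, 0 ≤ M p q) (hN : ∀ p q, 0 ≤ N p q) : ∀ p q, 0 ≤ (M * N) p q := by
  intro p q
  rw [Matrix.mul_apply]
  exact Finset.sum_nonneg fun t _ => mul_nonneg (hM p t) (hN t q)

private lemma nn_pow {m : Type*} [Fintype m] [DecidableEq m] {M : Matrix m m ℝ}
    (hM : ∀ p q, 0 ≤ M p q) : ∀ k, ∀ p q, 0 ≤ (M ^ k) p q := by
  intro k
  induction k with
  | zero => intro p q; rw [pow_zero, Matrix.one_apply]; split <;> norm_num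
  | succ k ih => rw [pow_succ']; exact nn_mul hM ih

include hA in
private lemma nn_dB : ∀ p q, 0 ≤ delayBlock A p q := by
  intro p q
  unfold delayBlock
  split
  · exact hA _ _ _
  · split <;> norm_num

include hA in
private lemma descent (j : Fin n) : ∀ (k : ℕ) (a b : Fin (L + 1)), (b : ℕ) + k = (a : ℕ) →
    1 ≤ (delayBlock A ^ k) (j, a) (j, b) := by
  intro k
  induction k with
  | zero =>
    intro a b hab
    have : a = b := Fin.ext (by omega)
    rw [pow_zero, this, Matrix.one_apply_eq]
  | succ k ih =>
    intro a b hab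
    have haL : (b : ℕ) + k < L + 1 := by omega
    set a' : Fin (L + 1) := ⟨(b : ℕ) + k, haL⟩ with ha'
    have h1 : delayBlock A (j, a) (j, a') = 1 := by
      unfold delayBlock
      have ha0 : ¬((a : ℕ) = 0) := by omega
      rw [if_neg ha0, if_pos ⟨rfl, by simp [ha']; omega⟩]
    have h2 : 1 ≤ (delayBlock A ^ k) (j, a') (j, b) := ih a' b (by simp [ha'])
    rw [pow_succ', Matrix.mul_apply]
    calc (1 : ℝ) = delayBlock A (j, a) (j, a') * 1 := by rw [h1, one_mul]
    _ ≤ delayBlock A (j, a) (j, a') * (delayBlock A ^ k) (j, a') (j, b) := by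
        rw [h1]; simpa using h2
    _ ≤ ∑ p, delayBlock A (j, a) p * (delayBlock A ^ k) p (j, b) := by
        refine Finset.single_le_sum
          (f := fun p => delayBlock A (j, a) p * (delayBlock A ^ k) p (j, b)) ?_
          (Finset.mem_univ (j, a'))
        intro p _
        exact mul_nonneg (nn_dB A hA _ _) (nn_pow (nn_dB A hA) k _ _)

include hA in
private lemma block_entry_le (ℓ : Fin (L + 1)) (i j : Fin n) :
    A ℓ i j ≤ (delayBlock A ^ ((ℓ : ℕ) + 1)) (i, 0) (j, 0) := by
  rw [pow_succ', Matrix.mul_apply]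
  have h1 : delayBlock A (i, (0 : Fin (L + 1))) (j, ℓ) = A ℓ i j := by
    unfold delayBlock
    rw [if_pos (by simp)]
  have h2 : 1 ≤ (delayBlock A ^ (ℓ : ℕ)) (j, ℓ) (j, 0) :=
    descent A hA j (ℓ : ℕ) ℓ 0 (by simp)
  calc A ℓ i j = A ℓ i j * 1 := (mul_one _).symm
  _ ≤ delayBlock A (i, 0) (j, ℓ) * (delayBlock A ^ (ℓ : ℕ)) (j, ℓ) (j, 0) := by
      rw [h1]; exact mul_le_mul_of_nonneg_left h2 (hA ℓ i j)
  _ ≤ ∑ p, delayBlock A (i, 0) p * (delayBlock A ^ (ℓ : ℕ)) p (j, 0) := by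
      refine Finset.single_le_sum
        (f := fun p => delayBlock A (i, 0) p * (delayBlock A ^ (ℓ : ℕ)) p (j, 0)) ?_
        (Finset.mem_univ (j, ℓ))
      intro p _
      exact mul_nonneg (nn_dB A hA _ _) (nn_pow (nn_dB A hA) _ _ _)

/-- The auxiliary matrix `D = 𝒜 * (I + 𝒜 + ⋯ + 𝒜^L)`. -/
private noncomputable def Dmat : Matrix (Fin n × Fin (L + 1)) (Fin n × Fin (L + 1)) ℝ :=
  delayBlock A * ∑ k ∈ Finset.range (L + 1), delayBlock A ^ k

private lemma Dmat_eq : Dmat A = ∑ k ∈ Finset.range (L + 1), delayBlock A ^ (k + 1) := by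
  rw [Dmat, Finset.mul_sum]
  exact Finset.sum_congr rfl fun k _ => (pow_succ' _ _).symm

include hA in
private lemma nn_D : ∀ p q, 0 ≤ Dmat A p q := by
  intro p q
  rw [Dmat_eq, Matrix.sum_apply]
  exact Finset.sum_nonneg fun k _ => nn_pow (nn_dB A hA) _ _ _

include hA in
private lemma A_le_D (ℓ : Fin (L + 1)) (i j : Fin n) : A ℓ i j ≤ Dmat A (i, 0) (j, 0) := by
  rw [Dmat_eq, Matrix.sum_apply]
  calc A ℓ i j ≤ (delayBlock A ^ ((ℓ : ℕ) + 1)) (i, 0) (j, 0) := block_entry_le A hA ℓ i j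
  _ ≤ ∑ k ∈ Finset.range (L + 1), (delayBlock A ^ (k + 1)) (i, 0) (j, 0) := by
      refine Finset.single_le_sum
        (f := fun k => (delayBlock A ^ (k + 1)) (i, 0) (j, 0)) ?_
        (Finset.mem_range.mpr ℓ.isLt)
      intro k _
      exact nn_pow (nn_dB A hA) _ _ _

include hA in
private lemma S_le_D (i j : Fin n) :
    (∑ ℓ, A ℓ) i j ≤ ((L : ℝ) + 1) * Dmat A (i, 0) (j, 0) := by
  rw [Matrix.sum_apply]
  calc ∑ ℓ, A ℓ i j ≤ ∑ _ℓ : Fin (L + 1), Dmat A (i, 0) (j, 0) :=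
        Finset.sum_le_sum fun ℓ _ => A_le_D A hA ℓ i j
  _ = ((L : ℝ) + 1) * Dmat A (i, 0) (j, 0) := by
      rw [Finset.sum_const, Finset.card_univ, Fintype.card_fin, nsmul_eq_mul]
      push_cast
      ring

include hA in
private lemma key_bound : ∀ (m : ℕ) (i j : Fin n),
    ((∑ ℓ, A ℓ) ^ m) i j ≤ ((L : ℝ) + 1) ^ m * (Dmat A ^ m) (i, 0) (j, 0) := by
  intro m
  induction m with
  | zero =>
    intro i j
    by_cases hij : i = j <;>
      simp [Matrix.one_apply, Prod.ext_iff, hij]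
  | succ m ih =>
    intro i j
    have hnnS : ∀ i j, 0 ≤ (∑ ℓ, A ℓ) i j := by
      intro i j
      rw [Matrix.sum_apply]
      exact Finset.sum_nonneg fun ℓ _ => hA ℓ i j
    rw [pow_succ', Matrix.mul_apply]
    have step1 : ∑ t, (∑ ℓ, A ℓ) i t * ((∑ ℓ, A ℓ) ^ m) t j ≤
        ∑ t, (((L : ℝ) + 1) * Dmat A (i, 0) (t, 0)) *
          (((L : ℝ) + 1) ^ m * (Dmat A ^ m) (t, 0) (j, 0)) := by
      refine Finset.sum_le_sum fun t _ => ?_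
      refine mul_le_mul (S_le_D A hA i t) (ih t j) (nn_pow hnnS m t j) ?_
      exact mul_nonneg (by positivity) (nn_D A hA _ _)
    have step2 : ∑ t, (((L : ℝ) + 1) * Dmat A (i, 0) (t, 0)) *
          (((L : ℝ) + 1) ^ m * (Dmat A ^ m) (t, 0) (j, 0)) =
        ((L : ℝ) + 1) ^ (m + 1) * ∑ t, Dmat A (i, 0) (t, 0) * (Dmat A ^ m) (t, 0) (j, 0) := by
      rw [Finset.mul_sum]
      exact Finset.sum_congr rfl fun t _ => by ring
    have step3 : ∑ t, Dmat A (i, 0) (t, 0) * (Dmat A ^ m) (t, 0) (j, 0) ≤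
        ∑ p, Dmat A (i, 0) p * (Dmat A ^ m) p (j, 0) := by
      rw [Fintype.sum_prod_type]
      refine Finset.sum_le_sum fun t _ => ?_
      refine Finset.single_le_sum
        (f := fun a => Dmat A (i, 0) (t, a) * (Dmat A ^ m) (t, a) (j, 0)) ?_
        (Finset.mem_univ 0)
      intro a _
      exact mul_nonneg (nn_D A hA _ _) (nn_pow (nn_D A hA) _ _ _)
    calc ∑ t, (∑ ℓ, A ℓ) i t * ((∑ ℓ, A ℓ) ^ m) t j
        ≤ ((L : ℝ) + 1) ^ (m + 1) * ∑ t, Dmat A (i, 0) (t, 0) * (Dmat A ^ m) (t, 0) (j, 0) := by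
          rw [← step2]; exact step1
    _ ≤ ((L : ℝ) + 1) ^ (m + 1) * ∑ p, Dmat A (i, 0) p * (Dmat A ^ m) p (j, 0) :=
          mul_le_mul_of_nonneg_left step3 (by positivity)
    _ = ((L : ℝ) + 1) ^ (m + 1) * (Dmat A ^ (m + 1)) (i, 0) (j, 0) := by
          rw [pow_succ' (Dmat A) m, Matrix.mul_apply]

end Comb

theorem stmt1 {n L : ℕ}
    (A : Fin (L + 1) → Matrix (Fin n) (Fin n) ℝ)
    (hA : ∀ ℓ i j, 0 ≤ A ℓ i j)
    (h : specRad (delayBlock A) = 0) :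
    specRad (∑ ℓ, A ℓ) = 0 := by
  obtain ⟨N, hN⟩ := isNilpotent_of_specRad_zero (delayBlock A) h
  have hcomm : Commute (delayBlock A) (∑ k ∈ Finset.range (L + 1), delayBlock A ^ k) :=
    Commute.sum_right _ _ _ fun k _ => (Commute.refl _).pow_right k
  have hDN : Dmat A ^ N = 0 := by
    rw [Dmat, hcomm.mul_pow, hN, Matrix.zero_mul]
  have hnnS : ∀ i j, 0 ≤ (∑ ℓ, A ℓ) i j := by
    intro i j
    rw [Matrix.sum_apply]
    exact Finset.sum_nonneg fun ℓ _ => hA ℓ i j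
  have hSN : (∑ ℓ, A ℓ) ^ N = 0 := by
    ext i j
    have hub := key_bound A hA N i j
    rw [hDN] at hub
    simp only [Matrix.zero_apply, mul_zero] at hub
    exact le_antisymm hub (nn_pow hnnS N i j)
  exact specRad_eq_zero_of_isNilpotent _ ⟨N, hSN⟩
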